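/- Let n ≥ 1, ε > 0, and let f : ℝⁿ → ℝ be continuously differentiable. Then ∫_{ℝⁿ} ‖∇(H ∘ f)(x)‖ dx ≤ (1/2) · ∫_{ℝⁿ} ( ε⁻¹ · W(f(x)) + ε · ‖∇f(x)‖² ) dx, where both sides are interpreted as integrals with values in [0, ∞] with respect to Lebesgue measure. -/

import Mathlib

open MeasureTheory

/-- The double-well potential `W(s) = (1 - s²)²`. -/
noncomputable def W (s : ℝ) : ℝ := (1 - s ^ 2) ^ 2

/-- `H(s) = ∫_{-1}^{s} √(min(W(r), 1 + r²)) dr`. -/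
noncomputable def H (s : ℝ) : ℝ :=
  ∫ r in (-1 : ℝ)..s, Real.sqrt (min (W r) (1 + r ^ 2))

lemma g_cont : Continuous (fun r : ℝ => Real.sqrt (min (W r) (1 + r ^ 2))) := by
  apply Real.continuous_sqrt.comp
  apply Continuous.min
  · unfold W; continuity
  · continuity

lemma H_hasDerivAt (s : ℝ) :
    HasDerivAt H (Real.sqrt (min (W s) (1 + s ^ 2))) s :=
  (g_cont.integral_hasStrictDerivAt (-1) s).hasDerivAt

/-- Euclidean version of the Modica–Mortola integral estimate (3.2): for any
`C¹` function `f : ℝⁿ → ℝ` and `ε > 0`,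
`∫ ‖∇(H ∘ f)‖ ≤ (1/2) ∫ (ε⁻¹ W(f) + ε ‖∇f‖²)`, both sides taken in `[0, ∞]`. -/
theorem modica_mortola_integral_estimate
    (n : ℕ) (hn : 1 ≤ n) (ε : ℝ) (hε : 0 < ε)
    (f : EuclideanSpace ℝ (Fin n) → ℝ) (hf : ContDiff ℝ 1 f) :
    (∫⁻ x, ENNReal.ofReal ‖fderiv ℝ (H ∘ f) x‖) ≤
      ENNReal.ofReal (1 / 2) *
        ∫⁻ x, ENNReal.ofReal (ε⁻¹ * W (f x) + ε * ‖fderiv ℝ f x‖ ^ 2) := by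
  have key : ∀ x, ENNReal.ofReal ‖fderiv ℝ (H ∘ f) x‖ ≤
      ENNReal.ofReal (1 / 2) *
        ENNReal.ofReal (ε⁻¹ * W (f x) + ε * ‖fderiv ℝ f x‖ ^ 2) := by
    intro x
    have hfd : HasFDerivAt f (fderiv ℝ f x) x :=
      (hf.differentiable one_ne_zero x).hasFDerivAt
    have hcomp : HasFDerivAt (H ∘ f)
        (Real.sqrt (min (W (f x)) (1 + (f x) ^ 2)) • fderiv ℝ f x) x :=
      (H_hasDerivAt (f x)).comp_hasFDerivAt x hfd
    rw [hcomp.fderiv]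
    set g := Real.sqrt (min (W (f x)) (1 + (f x) ^ 2)) with hg
    set L := ‖fderiv ℝ f x‖ with hL
    have hWnn : 0 ≤ W (f x) := sq_nonneg _
    have hnorm : ‖g • fderiv ℝ f x‖ = g * L := by
      rw [norm_smul, Real.norm_eq_abs, abs_of_nonneg (Real.sqrt_nonneg _)]
    rw [hnorm, ← ENNReal.ofReal_mul (by norm_num)]
    apply ENNReal.ofReal_le_ofReal
    have h1 : g ≤ Real.sqrt (W (f x)) :=
      Real.sqrt_le_sqrt (min_le_left _ _)
    have hLnn : 0 ≤ L := norm_nonneg _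
    have h2 : g * L ≤ Real.sqrt (W (f x)) * L := by
      apply mul_le_mul_of_nonneg_right h1 hLnn
    refine h2.trans ?_
    have hsq : Real.sqrt (W (f x)) ^ 2 = W (f x) := Real.sq_sqrt hWnn
    have hsnn : 0 ≤ Real.sqrt (W (f x)) := Real.sqrt_nonneg _
    have h3 : 2 * ε * (Real.sqrt (W (f x)) * L) ≤ W (f x) + ε ^ 2 * L ^ 2 := by
      nlinarith [sq_nonneg (Real.sqrt (W (f x)) - ε * L)]
    have h4 : Real.sqrt (W (f x)) * L ≤ (W (f x) + ε ^ 2 * L ^ 2) / (2 * ε) :=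
      (le_div_iff₀ (by positivity)).mpr (by linarith)
    have h5 : (W (f x) + ε ^ 2 * L ^ 2) / (2 * ε) =
        1 / 2 * (ε⁻¹ * W (f x) + ε * L ^ 2) := by
      field_simp
    linarith
  calc ∫⁻ x, ENNReal.ofReal ‖fderiv ℝ (H ∘ f) x‖
      ≤ ∫⁻ x, ENNReal.ofReal (1 / 2) *
          ENNReal.ofReal (ε⁻¹ * W (f x) + ε * ‖fderiv ℝ f x‖ ^ 2) :=
        lintegral_mono key
    _ = ENNReal.ofReal (1 / 2) *
        ∫⁻ x, ENNReal.ofReal (ε⁻¹ * W (f x) + ε * ‖fderiv ℝ f x‖ ^ 2) :=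
        lintegral_const_mul' _ _ (by simp)
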